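/- Let A = (Q, E, s, F) be a Wheeler GDFA. Then: (1) s comes first in the total order ⪯_A (that is, s ⪯_A u for every u ∈ Q); (2) for every (u', u, ρ), (v', v, ρ') ∈ E, if u ≺_A v and ρ' is not a strict suffix of ρ, then ρ ⪯ ρ' in co-lexicographic order; (3) for every (u', u, ρ), (v', v, ρ) ∈ E, if u ≺_A v, then u' ≺_A v'. -/

import Mathlib

/-!
Common framework: generalized automata (GNFAs/GDFAs) over a finite alphabet `A`,
following the paper "A Myhill-Nerode theorem for generalized automata".
Strings over `A` are modeled as `List A`.
-/

/-- A path of edges (from `E`) from a state to a state whose concatenated labels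
form the given string. -/
inductive EdgePath {A Q : Type} (E : Set (Q × Q × List A)) : Q → List A → Q → Prop
  | refl (u : Q) : EdgePath E u [] u
  | step {u v w : Q} {ρ α : List A} :
      (u, v, ρ) ∈ E → EdgePath E v α w → EdgePath E u (ρ ++ α) w

/-- A generalized nondeterministic finite automaton (GNFA) over alphabet `A`
with a finite state type `Q`: a finite set of string-labeled edges, an initial state,
a set of final states; every state is reachable from the initial state and
co-reachable (final, or a path leads from it to a final state). -/
structure GNFA (A Q : Type) where
  E : Set (Q × Q × List A)
  init : Q
  final : Set Q
  finQ : Finite Q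
  finE : E.Finite
  reach : ∀ u : Q, ∃ α : List A, EdgePath E init α u
  coreach : ∀ u : Q, ∃ (α : List A) (v : Q), v ∈ final ∧ EdgePath E u α v

namespace GNFA

variable {A Q : Type}

/-- `I_α`: the set of states reached from the initial state by reading `α`. -/
def Iword (M : GNFA A Q) (α : List A) : Set Q := {u | EdgePath M.E M.init α u}

/-- `I_u`: the set of strings that can be read from the initial state to `u`. -/
def Istate (M : GNFA A Q) (u : Q) : Set (List A) := {α | EdgePath M.E M.init α u}

/-- The language recognized by the automaton. -/
def Lang (M : GNFA A Q) : Set (List A) := {α | ∃ u ∈ M.final, EdgePath M.E M.init α u}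

/-- `W(A) = ⋃_{u ∈ Q} I_u`. -/
def WSet (M : GNFA A Q) : Set (List A) := {α | ∃ u : Q, EdgePath M.E M.init α u}

/-- A GNFA is a GDFA if: no edge is labeled with the empty string, distinct edges
leaving a state have distinct labels, and the labels of edges leaving a state form
a prefix-free set. -/
def IsGDFA (M : GNFA A Q) : Prop :=
  (∀ u v ρ, (u, v, ρ) ∈ M.E → ρ ≠ []) ∧
  (∀ u v v' ρ, (u, v, ρ) ∈ M.E → (u, v', ρ) ∈ M.E → v = v') ∧
  (∀ u v v' ρ ρ', (u, v, ρ) ∈ M.E → (u, v', ρ') ∈ M.E → ρ <+: ρ' → ρ = ρ')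

end GNFA

/-- Isomorphism of GNFAs: a bijection of states preserving the initial state,
final states and labeled edges. -/
def GNFA.Isomorphic {A Q₁ Q₂ : Type} (M : GNFA A Q₁) (N : GNFA A Q₂) : Prop :=
  ∃ φ : Q₁ ≃ Q₂, φ M.init = N.init ∧ (∀ u, u ∈ M.final ↔ φ u ∈ N.final) ∧
    ∀ u v ρ, (u, v, ρ) ∈ M.E ↔ (φ u, φ v, ρ) ∈ N.E

section LangDefs
variable {A : Type}

/-- `Pref L`: the set of prefixes of strings of `L`. -/
def Pref (L : Set (List A)) : Set (List A) := {α | ∃ β ∈ L, α <+: β}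

/-- Prefix-free kernel: the strings of `X` having no strict prefix in `X`. -/
def pfKernel (X : Set (List A)) : Set (List A) :=
  {α ∈ X | ∀ β, β <+: α → β ≠ α → β ∉ X}

/-- `T_α = {ρ ∈ Σ⁺ : αρ ∈ W}`. -/
def Tset (W : Set (List A)) (α : List A) : Set (List A) := {ρ | ρ ≠ [] ∧ α ++ ρ ∈ W}

/-- `W` is locally bounded if `K(T_α)` is finite for every `α ∈ W`. -/
def LocallyBounded (W : Set (List A)) : Prop := ∀ α ∈ W, (pfKernel (Tset W α)).Finite

/-- `r` is an equivalence relation on `W`. -/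
def IsEquivOn (W : Set (List A)) (r : List A → List A → Prop) : Prop :=
  (∀ α ∈ W, r α α) ∧
  (∀ α β, α ∈ W → β ∈ W → r α β → r β α) ∧
  (∀ α β γ, α ∈ W → β ∈ W → γ ∈ W → r α β → r β γ → r α γ)

/-- Right-invariance of an equivalence relation on `W`. -/
def RightInvariant (W : Set (List A)) (r : List A → List A → Prop) : Prop :=
  ∀ α ∈ W, ∀ β ∈ W, r α β → ∀ φ : List A,
    (α ++ φ ∈ W ↔ β ++ φ ∈ W) ∧ (α ++ φ ∈ W → r (α ++ φ) (β ++ φ))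

/-- The right-invariant refinement of `r` on `W`. -/
def riRef (W : Set (List A)) (r : List A → List A → Prop) :
    List A → List A → Prop := fun α β =>
  ∀ φ : List A, (α ++ φ ∈ W ↔ β ++ φ ∈ W) ∧ (α ++ φ ∈ W → r (α ++ φ) (β ++ φ))

/-- The Myhill–Nerode equivalence `≡_{L,W}`: the right-invariant refinement of
`α ∼_{L,W} β ⟺ (α ∈ L ⟺ β ∈ L)`. -/
def mnEquiv (L W : Set (List A)) : List A → List A → Prop :=
  riRef W (fun α β => (α ∈ L ↔ β ∈ L))

/-- The `r`-class of `α` inside `W`. -/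
def eqClass (W : Set (List A)) (r : List A → List A → Prop) (α : List A) :
    Set (List A) := {β ∈ W | r α β}

/-- `r` has finite index on `W`: the set of its classes is finite. -/
def FiniteIndex (W : Set (List A)) (r : List A → List A → Prop) : Prop :=
  {s : Set (List A) | ∃ α ∈ W, s = eqClass W r α}.Finite

/-- `L` is a union of `r`-classes (for `L ⊆ W`). -/
def UnionOfClasses (W : Set (List A)) (r : List A → List A → Prop)
    (L : Set (List A)) : Prop := ∀ α ∈ L, ∀ β ∈ W, r α β → β ∈ L

end LangDefs

namespace GNFA
variable {A Q : Type}

/-- `α ∼_A β ⟺ I_α = I_β` (on `W(A)`). -/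
def simA (M : GNFA A Q) : List A → List A → Prop := fun α β => M.Iword α = M.Iword β

/-- `≡_A`: the right-invariant refinement of `∼_A` on `W(A)`. -/
def equivA (M : GNFA A Q) : List A → List A → Prop := riRef M.WSet M.simA

end GNFA

section WheelerDefs
variable {A Q : Type} [LinearOrder A]

/-- Co-lexicographic strict order on strings: compare reverses lexicographically. -/
def colexLt (α β : List A) : Prop := List.Lex (· < ·) α.reverse β.reverse

/-- Co-lexicographic (reflexive) order on strings. -/
def colexLe (α β : List A) : Prop := colexLt α β ∨ α = β

namespace GNFA

/-- The relation `⪯_A` on states: reflexive, and for distinct `u, v`,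
`u ≺_A v` iff every string of `I_u` is co-lexicographically smaller than
every string of `I_v`. -/
def ordA (M : GNFA A Q) (u v : Q) : Prop :=
  u = v ∨ ∀ α ∈ M.Istate u, ∀ β ∈ M.Istate v, colexLt α β

/-- The strict relation `≺_A`. -/
def sordA (M : GNFA A Q) (u v : Q) : Prop := u ≠ v ∧ M.ordA u v

/-- A GDFA is Wheeler if `⪯_A` is a total order on states. -/
def Wheeler (M : GNFA A Q) : Prop :=
  (∀ u v, M.ordA u v → M.ordA v u → u = v) ∧
  (∀ u v w, M.ordA u v → M.ordA v w → M.ordA u w) ∧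
  (∀ u v, M.ordA u v ∨ M.ordA v u)

/-- `G^≺(α)`: states reached only by strings co-lexicographically smaller than `α`. -/
def Gprec (M : GNFA A Q) (α : List A) : Set Q := {u | ∀ β ∈ M.Istate u, colexLt β α}

/-- `G_⊣(α)`: states reached by some string suffixed by `α`. -/
def Gsuf (M : GNFA A Q) (α : List A) : Set Q := {u | ∃ β ∈ M.Istate u, α <:+ β}

/-- `G^≺_⊣(α) = G^≺(α) ∪ G_⊣(α)`. -/
def GprecSuf (M : GNFA A Q) (α : List A) : Set Q := M.Gprec α ∪ M.Gsuf α

/-- `G*(α)`: states reached by an edge whose label is suffixed by `α`. -/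
def Gstar (M : GNFA A Q) (α : List A) : Set Q :=
  {v | ∃ v' ρ, (v', v, ρ) ∈ M.E ∧ α <:+ ρ}

/-- `λ(u)`: the set of nonempty strings labeling some edge entering `u`. -/
def lam (M : GNFA A Q) (u : Q) : Set (List A) := {ρ | ρ ≠ [] ∧ ∃ u', (u', u, ρ) ∈ M.E}

/-- `out(U, ρ)`: the number of edges labeled `ρ` leaving states in `U`. -/
noncomputable def outCount (M : GNFA A Q) (U : Set Q) (ρ : List A) : ℕ :=
  {e ∈ M.E | e.1 ∈ U ∧ e.2.2 = ρ}.ncard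

/-- `in(U, ρ)`: the number of edges labeled `ρ` entering states in `U`. -/
noncomputable def inCount (M : GNFA A Q) (U : Set Q) (ρ : List A) : ℕ :=
  {e ∈ M.E | e.2.1 ∈ U ∧ e.2.2 = ρ}.ncard

end GNFA

/-- `seg q j = Q[1, j]`: the first `j` states in the enumeration `q` of the states. -/
def seg {Q : Type} {n : ℕ} (q : Fin n → Q) (j : ℕ) : Set Q :=
  {u | ∃ i : Fin n, (i : ℕ) < j ∧ q i = u}

end WheelerDefs

section Aux

lemma EdgePath.trans_aux {A Q : Type} {E : Set (Q × Q × List A)} {a b c : Q}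
    {α β : List A} (h1 : EdgePath E a α b) (h2 : EdgePath E b β c) :
    EdgePath E a (α ++ β) c := by
  induction h1 with
  | refl u => simpa using h2
  | step he _ ih => rw [List.append_assoc]; exact EdgePath.step he (ih h2)

lemma EdgePath.single_aux {A Q : Type} {E : Set (Q × Q × List A)} {a b : Q}
    {ρ : List A} (h : (a, b, ρ) ∈ E) : EdgePath E a ρ b := by
  have := EdgePath.step h (EdgePath.refl (E := E) b)
  simpa using this

variable {A : Type} [LinearOrder A]

lemma lex_asymm_aux : ∀ {a b : List A},
    List.Lex (· < ·) a b → List.Lex (· < ·) b a → False := by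
  intro a b h1
  induction h1 with
  | nil => intro h2; cases h2
  | cons h ih =>
      intro h2
      cases h2 with
      | cons h' => exact ih h'
      | rel h' => exact lt_irrefl _ h'
  | rel h =>
      intro h2
      cases h2 with
      | cons h' => exact lt_irrefl _ h
      | rel h' => exact lt_asymm h h'

lemma lex_append_right_aux {x y : List A} (p : List A)
    (h : List.Lex (· < ·) x y) : List.Lex (· < ·) (p ++ x) (p ++ y) := by
  induction p with
  | nil => simpa using h
  | cons c p ih => exact List.Lex.cons ih

lemma lex_append_of_not_prefix_aux : ∀ {a b : List A},
    List.Lex (· < ·) a b → ¬ a <+: b → ∀ x y : List A,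
    List.Lex (· < ·) (a ++ x) (b ++ y) := by
  intro a b h
  induction h with
  | nil => intro hp; exact absurd (List.nil_prefix) hp
  | @cons a l1 l2 h ih =>
      intro hp x y
      exact List.Lex.cons (ih (fun hpre => hp (List.cons_prefix_cons.mpr ⟨rfl, hpre⟩)) x y)
  | rel h => intro _ x y; exact List.Lex.rel h

lemma colexLt_asymm_aux {a b : List A} (h1 : colexLt a b) (h2 : colexLt b a) : False :=
  lex_asymm_aux h1 h2

lemma colexLt_append_same_aux {a b : List A} (ρ : List A) (h : colexLt a b) :
    colexLt (a ++ ρ) (b ++ ρ) := by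
  unfold colexLt at *
  rw [List.reverse_append, List.reverse_append]
  exact lex_append_right_aux _ h

lemma lex_trichotomy_aux : ∀ a b : List A,
    List.Lex (· < ·) a b ∨ a = b ∨ List.Lex (· < ·) b a
  | [], [] => Or.inr (Or.inl rfl)
  | [], _ :: _ => Or.inl (List.Lex.nil)
  | _ :: _, [] => Or.inr (Or.inr (List.Lex.nil))
  | a :: l1, b :: l2 => by
      rcases lt_trichotomy a b with h | h | h
      · exact Or.inl (List.Lex.rel h)
      · subst h
        rcases lex_trichotomy_aux l1 l2 with h | h | h
        · exact Or.inl (List.Lex.cons h)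
        · exact Or.inr (Or.inl (by rw [h]))
        · exact Or.inr (Or.inr (List.Lex.cons h))
      · exact Or.inr (Or.inr (List.Lex.rel h))

end Aux

/-- Properties of a Wheeler GDFA: (1) the initial state comes first in `⪯_A`;
(2) for edges `(u', u, ρ)` and `(v', v, ρ')`, if `u ≺_A v` and `ρ'` is not a strict
suffix of `ρ`, then `ρ ⪯ ρ'` co-lexicographically; (3) for edges with equal labels,
`u ≺_A v` implies `u' ≺_A v'`. -/
theorem wheeler_GDFA_local_properties {A Q : Type} [Fintype A] [LinearOrder A]
    (M : GNFA A Q) (hD : M.IsGDFA) (hW : M.Wheeler) :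
    (∀ u : Q, M.ordA M.init u) ∧
    (∀ u' u v' v : Q, ∀ ρ ρ' : List A, (u', u, ρ) ∈ M.E → (v', v, ρ') ∈ M.E →
      M.sordA u v → ¬(ρ' <:+ ρ ∧ ρ' ≠ ρ) → colexLe ρ ρ') ∧
    (∀ u' u v' v : Q, ∀ ρ : List A, (u', u, ρ) ∈ M.E → (v', v, ρ) ∈ M.E →
      M.sordA u v → M.sordA u' v') := by
  refine ⟨?_, ?_, ?_⟩
  · -- (1) initial state first
    intro u
    by_cases hu : M.init = u
    · exact Or.inl hu
    · rcases hW.2.2 M.init u with h | h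
      · exact h
      · rcases h with h | h
        · exact Or.inl h.symm
        · exfalso
          obtain ⟨β, hβ⟩ := M.reach u
          have hnil : ([] : List A) ∈ M.Istate M.init := EdgePath.refl _
          have h0 := h β hβ [] hnil
          simp only [colexLt, List.reverse_nil] at h0
          exact List.not_lex_nil h0
  · -- (2) label comparison
    intro u' u v' v ρ ρ' he1 he2 huv hsuf
    by_contra hlt
    have hne : ρ ≠ ρ' := fun h => hlt (Or.inr h)
    have hlt' : colexLt ρ' ρ := by
      rcases lex_trichotomy_aux ρ.reverse ρ'.reverse with h | h | h
      · exact absurd (Or.inl h) hlt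
      · exact absurd (List.reverse_injective h) hne
      · exact h
    have hnsuf : ¬ ρ' <:+ ρ := fun h => hsuf ⟨h, fun e => hne e.symm⟩
    have hnpre : ¬ ρ'.reverse <+: ρ.reverse := fun h =>
      hnsuf (List.reverse_prefix.mp (by simpa using h))
    obtain ⟨α, hα⟩ := M.reach u'
    obtain ⟨β, hβ⟩ := M.reach v'
    have hαρ : (α ++ ρ) ∈ M.Istate u := EdgePath.trans_aux hα (EdgePath.single_aux he1)
    have hβρ : (β ++ ρ') ∈ M.Istate v := EdgePath.trans_aux hβ (EdgePath.single_aux he2)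
    have hforall : ∀ γ ∈ M.Istate u, ∀ δ ∈ M.Istate v, colexLt γ δ := by
      rcases huv.2 with h | h
      · exact absurd h huv.1
      · exact h
    have h1 : colexLt (α ++ ρ) (β ++ ρ') := hforall _ hαρ _ hβρ
    have h2 : colexLt (β ++ ρ') (α ++ ρ) := by
      unfold colexLt
      rw [List.reverse_append, List.reverse_append]
      exact lex_append_of_not_prefix_aux hlt' hnpre _ _
    exact colexLt_asymm_aux h1 h2
  · -- (3) order propagation to sources
    intro u' u v' v ρ he1 he2 huv
    have hne : u' ≠ v' := by
      intro h
      subst h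
      exact huv.1 (hD.2.1 u' u v ρ he1 he2)
    refine ⟨hne, ?_⟩
    rcases hW.2.2 u' v' with h | h
    · exact h
    · rcases h with h | h
      · exact Or.inl h.symm
      · exfalso
        obtain ⟨α, hα⟩ := M.reach u'
        obtain ⟨β, hβ⟩ := M.reach v'
        have hαρ : (α ++ ρ) ∈ M.Istate u := EdgePath.trans_aux hα (EdgePath.single_aux he1)
        have hβρ : (β ++ ρ) ∈ M.Istate v := EdgePath.trans_aux hβ (EdgePath.single_aux he2)
        have hforall : ∀ γ ∈ M.Istate u, ∀ δ ∈ M.Istate v, colexLt γ δ := by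
          rcases huv.2 with h' | h'
          · exact absurd h' huv.1
          · exact h'
        have h1 : colexLt (α ++ ρ) (β ++ ρ) := hforall _ hαρ _ hβρ
        have h2 : colexLt (β ++ ρ) (α ++ ρ) := colexLt_append_same_aux ρ (h β hβ α hα)
        exact colexLt_asymm_aux h1 h2
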